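/- Let Γ be a finitely generated group such that finite-dimensional unitary representations of Γ separate points (i.e., for every g ≠ e there is a finite-dimensional unitary representation π with π(g) ≠ 1). Then Γ is residually finite. -/

import Mathlib

open scoped ENNReal

lemma isJacobsonRing_int' : IsJacobsonRing ℤ := by
  rw [isJacobsonRing_iff_prime_eq]
  intro P hP
  by_cases hbot : P = ⊥
  · subst hbot
    refine le_antisymm ?_ Ideal.le_jacobson
    intro x hx
    rw [Ideal.mem_jacobson_iff] at hx
    obtain ⟨z, hz⟩ := hx 1
    obtain ⟨w, hw⟩ := hx (-1)
    rw [Ideal.mem_bot] at hz hw ⊢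
    have u1 : x + 1 = 1 ∨ x + 1 = -1 :=
      Int.isUnit_iff.mp (IsUnit.of_mul_eq_one z (by linarith [mul_comm z (x+1), hz]))
    have u2 : 1 - x = 1 ∨ 1 - x = -1 :=
      Int.isUnit_iff.mp (IsUnit.of_mul_eq_one w (by linarith [mul_comm w (1-x), hw]))
    omega
  · haveI := IsPrime.to_maximal_ideal hbot
    exact Ideal.jacobson_eq_self_of_isMaximal

lemma finite_of_field_moduleFinite_int (F : Type) [Field F] [Module.Finite ℤ F] :
    Finite F := by
  rcases CharP.char_is_prime_or_zero F (ringChar F) with hp | h0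
  · haveI : Fact (Nat.Prime (ringChar F)) := ⟨hp⟩
    haveI : CharP F (ringChar F) := ringChar.charP F
    letI : Algebra (ZMod (ringChar F)) F := ZMod.algebra F (ringChar F)
    haveI : Module.Finite (ZMod (ringChar F)) F :=
      Module.Finite.of_restrictScalars_finite ℤ (ZMod (ringChar F)) F
    exact Module.finite_of_finite (ZMod (ringChar F))
  · haveI : CharP F 0 := h0 ▸ ringChar.charP F
    haveI : CharZero F := CharP.charP_to_charZero F
    exfalso
    have hint : IsIntegral ℤ (((Algebra.ofId ℚ F).restrictScalars ℤ) (2⁻¹ : ℚ)) :=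
      Algebra.IsIntegral.isIntegral _
    rw [isIntegral_algHom_iff ((Algebra.ofId ℚ F).restrictScalars ℤ)
      ((algebraMap ℚ F).injective)] at hint
    obtain ⟨y, hy⟩ := IsIntegrallyClosed.isIntegral_iff.mp hint
    have hy2 : ((y : ℚ)) = 2⁻¹ := hy
    have : (2 : ℚ) * y = 1 := by rw [hy2]; norm_num
    have h2 : ((2 * y : ℤ) : ℚ) = ((1 : ℤ) : ℚ) := by push_cast; linarith
    have := Int.cast_injective (α := ℚ) h2
    omega

/-- Any nonzero element of a finitely generated ℤ-algebra domain survives in some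
finite field quotient. -/
lemma exists_ringHom_to_finite_field {R : Type} [CommRing R] [IsDomain R]
    [Algebra.FiniteType ℤ R] (d : R) (hd : d ≠ 0) :
    ∃ (F : Type) (_ : Field F) (_ : Finite F) (f : R →+* F), f d ≠ 0 := by
  haveI : IsJacobsonRing ℤ := isJacobsonRing_int'
  haveI : IsJacobsonRing R := isJacobsonRing_of_finiteType (A := ℤ) (B := R)
  have hjac : ((⊥ : Ideal R)).jacobson = ⊥ :=
    IsJacobsonRing.out inferInstance Ideal.bot_prime.isRadical
  have hdj : d ∉ ((⊥ : Ideal R)).jacobson := by rw [hjac]; simpa using hd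
  rw [Ideal.jacobson, Ideal.mem_sInf] at hdj
  push_neg at hdj
  obtain ⟨m, ⟨-, hmmax⟩, hdm⟩ := hdj
  haveI : m.IsMaximal := hmmax
  letI : Field (R ⧸ m) := Ideal.Quotient.field m
  haveI : Algebra.FiniteType ℤ (R ⧸ m) :=
    Algebra.FiniteType.of_surjective (Ideal.Quotient.mkₐ ℤ m)
      (Ideal.Quotient.mkₐ_surjective ℤ m)
  haveI : Module.Finite ℤ (R ⧸ m) := finite_of_finite_type_of_isJacobsonRing ℤ (R ⧸ m)
  haveI : Finite (R ⧸ m) := finite_of_field_moduleFinite_int (R ⧸ m)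
  exact ⟨R ⧸ m, inferInstance, inferInstance, Ideal.Quotient.mk m,
    fun h => hdm (Ideal.Quotient.eq_zero_iff_mem.mp h)⟩

set_option maxHeartbeats 400000 in
set_option synthInstance.maxHeartbeats 80000 in
theorem residually_finite_of_finDimReps_separate {Γ : Type} [Group Γ]
    (hfg : Group.FG Γ)
    (hsep : ∀ g : Γ, g ≠ 1 →
      ∃ (k : ℕ) (π : Γ →* Matrix.unitaryGroup (Fin k) ℂ), π g ≠ 1) :
    ∀ g : Γ, g ≠ 1 →
      ∃ N : Subgroup Γ, N.Normal ∧ N.FiniteIndex ∧ g ∉ N := by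
  intro g hg
  obtain ⟨k, π, hπ⟩ := hsep g hg
  obtain ⟨T, hT, hTfin⟩ := Group.fg_iff.mp hfg
  -- the set of entries of generators and their inverses
  set S : Set ℂ := ⋃ γ ∈ T,
      (Set.range fun p : Fin k × Fin k => (π γ : Matrix (Fin k) (Fin k) ℂ) p.1 p.2) ∪
      (Set.range fun p : Fin k × Fin k => (π γ⁻¹ : Matrix (Fin k) (Fin k) ℂ) p.1 p.2) with hS
  have hSfin : S.Finite := hTfin.biUnion fun γ _ =>
    (Set.finite_range _).union (Set.finite_range _)
  set A : Subalgebra ℤ ℂ := Algebra.adjoin ℤ S with hA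
  haveI hft : Algebra.FiniteType ℤ A :=
    (Subalgebra.fg_iff_finiteType A).mp (Subalgebra.fg_def.mpr ⟨S, hSfin, rfl⟩)
  -- all entries of all π γ lie in A
  have key : ∀ γ : Γ, ∀ i j, (π γ : Matrix (Fin k) (Fin k) ℂ) i j ∈ A := by
    have htop : ∀ γ : Γ, γ ∈ Subgroup.closure T := by rw [hT]; intro γ; trivial
    intro γ
    have := Subgroup.closure_induction
      (p := fun γ _ => (∀ i j, (π γ : Matrix (Fin k) (Fin k) ℂ) i j ∈ A) ∧
        (∀ i j, (π γ⁻¹ : Matrix (Fin k) (Fin k) ℂ) i j ∈ A))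
      (fun x hx => by
        constructor
        · intro i j
          exact Algebra.subset_adjoin (Set.mem_biUnion hx (Or.inl ⟨(i, j), rfl⟩))
        · intro i j
          exact Algebra.subset_adjoin (Set.mem_biUnion hx (Or.inr ⟨(i, j), rfl⟩)))
      (by
        constructor <;>
        · intro i j
          simp only [inv_one, map_one]
          rw [show ((1 : Matrix.unitaryGroup (Fin k) ℂ) : Matrix (Fin k) (Fin k) ℂ) = 1 from rfl,
            Matrix.one_apply]
          split
          · exact one_mem A
          · exact zero_mem A)
      (fun x y hx hy ihx ihy => by
        constructor
        · intro i j
          have : (π (x * y) : Matrix (Fin k) (Fin k) ℂ) = (π x : Matrix (Fin k) (Fin k) ℂ) * (π y) := by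
            rw [map_mul]; rfl
          rw [this, Matrix.mul_apply]
          exact Subalgebra.sum_mem _ fun l _ => mul_mem (ihx.1 i l) (ihy.1 l j)
        · intro i j
          have : (π (x * y)⁻¹ : Matrix (Fin k) (Fin k) ℂ)
              = (π y⁻¹ : Matrix (Fin k) (Fin k) ℂ) * (π x⁻¹) := by
            rw [mul_inv_rev, map_mul]; rfl
          rw [this, Matrix.mul_apply]
          exact Subalgebra.sum_mem _ fun l _ => mul_mem (ihy.2 i l) (ihx.2 l j))
      (fun x hx ih => by
        refine ⟨ih.2, ?_⟩
        rw [inv_inv]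
        exact ih.1)
      (htop γ)
    exact this.1
  -- the representation with entries in A
  set mat : Γ → Matrix (Fin k) (Fin k) A :=
    fun γ => Matrix.of fun i j => (⟨(π γ : Matrix (Fin k) (Fin k) ℂ) i j, key γ i j⟩ : A)
    with hmat
  set ι : Matrix (Fin k) (Fin k) A →+* Matrix (Fin k) (Fin k) ℂ :=
    (A.val.toRingHom).mapMatrix with hι'
  have hinj : Function.Injective ι := Matrix.map_injective Subtype.val_injective
  have hι : ∀ γ : Γ, ι (mat γ) = (π γ : Matrix (Fin k) (Fin k) ℂ) := fun γ => rfl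
  have hmat_mul : ∀ a b : Γ, mat (a * b) = mat a * mat b := by
    intro a b
    apply hinj
    rw [map_mul, hι, hι, hι, map_mul]
    rfl
  have hmat_one : mat (1 : Γ) = 1 := by
    apply hinj
    rw [hι, map_one, map_one]
    rfl
  set ρ : Γ →* (Matrix (Fin k) (Fin k) A)ˣ :=
    { toFun := fun γ =>
        { val := mat γ
          inv := mat γ⁻¹
          val_inv := by rw [← hmat_mul, mul_inv_cancel, hmat_one]
          inv_val := by rw [← hmat_mul, inv_mul_cancel, hmat_one] }
      map_one' := Units.ext hmat_one
      map_mul' := fun a b => Units.ext (hmat_mul a b) } with hρ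
  -- a nonzero element of A witnessing π g ≠ 1
  have hne : mat g ≠ 1 := by
    intro h
    apply hπ
    have : ι (mat g) = ι 1 := by rw [h]
    rw [hι, map_one] at this
    exact Subtype.ext this
  obtain ⟨i, j, hij⟩ : ∃ i j, mat g i j ≠ (1 : Matrix (Fin k) (Fin k) A) i j := by
    by_contra h
    push_neg at h
    exact hne (Matrix.ext h)
  set d : A := mat g i j - (1 : Matrix (Fin k) (Fin k) A) i j with hd'
  have hd : d ≠ 0 := sub_ne_zero.mpr hij
  -- pass to a finite field quotient
  haveI : IsDomain A := inferInstance
  obtain ⟨F, hF, hFfin, f, hfd⟩ := exists_ringHom_to_finite_field d hd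
  letI : Field F := hF
  haveI : Finite F := hFfin
  haveI : Finite (Matrix (Fin k) (Fin k) F) := inferInstanceAs (Finite (Fin k → Fin k → F))
  set φ : Γ →* (Matrix (Fin k) (Fin k) F)ˣ :=
    (Units.map (f.mapMatrix.toMonoidHom)).comp ρ with hφ
  refine ⟨φ.ker, MonoidHom.normal_ker φ, Subgroup.finiteIndex_ker φ, ?_⟩
  intro hgker
  have h1 : (φ g).val = 1 := by rw [MonoidHom.mem_ker.mp hgker]; rfl
  have h2 : f.mapMatrix (mat g) = 1 := h1
  apply hfd
  have h3 : f (mat g i j) = f ((1 : Matrix (Fin k) (Fin k) A) i j) := by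
    have := congrFun (congrFun h2 i) j
    rw [show (f.mapMatrix (mat g)) i j = f (mat g i j) from rfl] at this
    rw [this, Matrix.one_apply, Matrix.one_apply]
    split <;> simp
  rw [hd', f.map_sub, h3, sub_self]
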